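/- Let K ⊆ ℂ be a number field of degree n over ℚ, let L ⊆ ℂ be the Galois closure of K over ℚ, let σ, τ : K → ℂ be two distinct ℚ-algebra embeddings, and let λ ∈ L with λ ≠ 0 and λ ≠ 1. Then the set V_{σ,τ,λ} := { x ∈ K : (1 − λ)·x = σ(x) − λ·τ(x) } (the equation holding in ℂ) is a ℚ-linear subspace of K satisfying 3·dim_ℚ(V_{σ,τ,λ}) ≤ 2n. -/

import Mathlib

open Module

/-- The ℂ-dimension of the space of ℚ-linear maps `M →ₗ[ℚ] ℂ` equals the ℚ-dimension of `M`. -/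
lemma finrank_qhom (M : Type*) [AddCommGroup M] [Module ℚ M] [FiniteDimensional ℚ M] :
    finrank ℂ (M →ₗ[ℚ] ℂ) = finrank ℚ M := by
  rw [← ((Module.finBasis ℚ M).constr ℂ :
      (Fin (finrank ℚ M) → ℂ) ≃ₗ[ℂ] (M →ₗ[ℚ] ℂ)).finrank_eq, Module.finrank_fin_fun]

lemma findim_qhom (M : Type*) [AddCommGroup M] [Module ℚ M] [FiniteDimensional ℚ M] :
    FiniteDimensional ℂ (M →ₗ[ℚ] ℂ) :=
  LinearEquiv.finiteDimensional ((Module.finBasis ℚ M).constr ℂ :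
      (Fin (finrank ℚ M) → ℂ) ≃ₗ[ℂ] (M →ₗ[ℚ] ℂ))

/-- Any ℚ-algebra embedding of `K` into ℂ extends along an embedding `K → L` with `L/ℚ`
algebraic. -/
lemma exists_extension {K L : Type*} [Field K] [Field L] [Algebra ℚ K] [Algebra ℚ L]
    [Algebra.IsAlgebraic ℚ L] (i : K →ₐ[ℚ] L) (ρ : K →ₐ[ℚ] ℂ) :
    ∃ h : L →ₐ[ℚ] ℂ, ∀ x, h (i x) = ρ x := by
  letI : Algebra K L := i.toRingHom.toAlgebra
  letI : Algebra K ℂ := ρ.toRingHom.toAlgebra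
  haveI : IsScalarTower ℚ K L := IsScalarTower.of_algebraMap_eq fun q => (i.commutes q).symm
  haveI : IsScalarTower ℚ K ℂ := IsScalarTower.of_algebraMap_eq fun q => (ρ.commutes q).symm
  haveI : Algebra.IsAlgebraic K L := Algebra.IsAlgebraic.tower_top (K := ℚ) K
  refine ⟨((IsAlgClosed.lift : L →ₐ[K] ℂ)).restrictScalars ℚ, fun x => ?_⟩
  exact (IsAlgClosed.lift : L →ₐ[K] ℂ).commutes x

set_option maxHeartbeats 1000000 in
set_option synthInstance.maxHeartbeats 400000 in
theorem stmt8 (n : ℕ) (K : IntermediateField ℚ ℂ) [FiniteDimensional ℚ K]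
    (hn : Module.finrank ℚ K = n)
    (σ τ : K →ₐ[ℚ] ℂ) (hστ : σ ≠ τ)
    (lam : ℂ) (hlam : lam ∈ IntermediateField.normalClosure ℚ K ℂ) (hlam0 : lam ≠ 0) (hlam1 : lam ≠ 1) :
    ∃ V : Submodule ℚ K,
      (V : Set K) = {x : K | (1 - lam) * (x : ℂ) = σ x - lam * τ x} ∧
      3 * Module.finrank ℚ V ≤ 2 * n := by
  classical
  letI : DecidableEq (K →ₐ[ℚ] ℂ) := Classical.decEq _
  set L := IntermediateField.normalClosure ℚ K ℂ with hLdef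
  let ι : K →ₐ[ℚ] ℂ := K.val
  let f : K →ₗ[ℚ] ℂ := (1 - lam) • ι.toLinearMap - σ.toLinearMap + lam • τ.toLinearMap
  have hfapply : ∀ x : K, f x = (1 - lam) * (x : ℂ) - σ x + lam * τ x := by
    intro x
    simp only [f, ι, LinearMap.add_apply, LinearMap.sub_apply, LinearMap.smul_apply,
      AlgHom.toLinearMap_apply, smul_eq_mul]
    rfl
  refine ⟨LinearMap.ker f, ?_, ?_⟩
  · ext x
    simp only [SetLike.mem_coe, LinearMap.mem_ker, Set.mem_setOf_eq, hfapply]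
    constructor
    · intro h; linear_combination h
    · intro h; linear_combination h
  -- the dimension bound
  set V := LinearMap.ker f with hVdef
  have hKL : K ≤ L := IntermediateField.le_normalClosure K
  haveI : Algebra.IsAlgebraic ℚ L := Algebra.IsAlgebraic.of_finite ℚ L
  let lam' : L := ⟨lam, hlam⟩
  have hlam'0 : lam' ≠ 0 := fun h => hlam0 (congrArg Subtype.val h)
  have hlam'1 : lam' ≠ 1 := fun h => hlam1 (congrArg Subtype.val h)
  let ιL : K →ₐ[ℚ] L := IntermediateField.inclusion hKL
  let σL : K →ₐ[ℚ] L := (normalClosure.algHomEquiv ℚ K ℂ).symm σ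
  let τL : K →ₐ[ℚ] L := (normalClosure.algHomEquiv ℚ K ℂ).symm τ
  have hσL : ∀ x : K, (σL x : ℂ) = σ x := fun x => rfl
  have hτL : ∀ x : K, (τL x : ℂ) = τ x := fun x => rfl
  have hιL : ∀ x : K, (ιL x : ℂ) = (x : ℂ) := fun x => rfl
  have hsigne : σL ≠ τL := by
    intro h
    apply hστ
    ext x
    have := congrArg (fun g => ((g x : L) : ℂ)) h
    simpa [hσL, hτL] using this
  -- the main relation, inside L
  have hrel : ∀ v : K, v ∈ V →
      (1 - lam') * ιL v - σL v + lam' * τL v = 0 := by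
    intro v hv
    have hv' : f v = 0 := hv
    rw [hfapply] at hv'
    apply Subtype.ext
    push_cast [hσL, hτL, hιL]
    simpa using hv'
  -- the space of ℚ-linear functionals
  haveI : FiniteDimensional ℂ (K →ₗ[ℚ] ℂ) := findim_qhom K
  -- basis of embeddings
  let fam : (K →ₐ[ℚ] ℂ) → (K →ₗ[ℚ] ℂ) := fun ρ => ρ.toLinearMap
  have hcardEmb : Fintype.card (K →ₐ[ℚ] ℂ) = n := by rw [AlgHom.card, hn]
  have hli : LinearIndependent ℂ fam := by
    let Φ : (K →ₗ[ℚ] ℂ) →ₗ[ℂ] (K → ℂ) :=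
      { toFun := fun g => ⇑g
        map_add' := fun a b => rfl
        map_smul' := fun c a => rfl }
    have h1 : LinearIndependent ℂ (fun ρ : K →ₐ[ℚ] ℂ => (Φ ∘ fam) ρ) := by
      have := (linearIndependent_monoidHom K ℂ).comp
        (fun ρ : K →ₐ[ℚ] ℂ => (ρ : K →* ℂ))
        (fun a b hab => by
          ext x; exact DFunLike.congr_fun hab x)
      exact this
    exact LinearIndependent.of_comp Φ h1
  have hcardH : Fintype.card (K →ₐ[ℚ] ℂ) = finrank ℂ (K →ₗ[ℚ] ℂ) := by
    rw [hcardEmb, finrank_qhom, hn]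
  haveI : Nonempty (K →ₐ[ℚ] ℂ) := ⟨σ⟩
  let B : Basis (K →ₐ[ℚ] ℂ) ℂ (K →ₗ[ℚ] ℂ) :=
    basisOfLinearIndependentOfCardEqFinrank hli hcardH
  have hB : ∀ ρ, B ρ = fam ρ := fun ρ =>
    congrFun (coe_basisOfLinearIndependentOfCardEqFinrank hli hcardH) ρ
  -- the restriction map and the annihilator of V
  let res : (K →ₗ[ℚ] ℂ) →ₗ[ℂ] (V →ₗ[ℚ] ℂ) :=
    { toFun := fun g => g.comp V.subtype
      map_add' := fun a b => rfl
      map_smul' := fun c a => rfl }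
  have hsurj : Function.Surjective res := by
    intro g
    obtain ⟨g', hg'⟩ := LinearMap.exists_extend g
    exact ⟨g', hg'⟩
  set A := LinearMap.ker res with hAdef
  have hrank : finrank ℚ V + finrank ℂ A = n := by
    have h1 := LinearMap.finrank_range_add_finrank_ker res
    rw [LinearMap.range_eq_top.mpr hsurj, finrank_top, finrank_qhom, finrank_qhom, hn] at h1
    exact h1
  -- for each embedding ρ, a vector of A supported near ρ
  have key : ∀ ρ : K →ₐ[ℚ] ℂ, ∃ w ∈ A,
      ρ ∈ (B.repr w).support ∧ (B.repr w).support.card ≤ 3 := by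
    intro ρ
    obtain ⟨h, hh⟩ := exists_extension ιL ρ
    have hinj : Function.Injective h := h.toRingHom.injective
    set c : ℂ := h lam' with hc
    have hc0 : c ≠ 0 := fun h0 => hlam'0 (hinj (by rw [map_zero, ← hc]; exact h0))
    have hc1 : c ≠ 1 := fun h0 => hlam'1 (hinj (by rw [map_one, ← hc]; exact h0))
    have hρ : ∀ x : K, ρ x = h (ιL x) := fun x => (hh x).symm
    let E2 : K →ₐ[ℚ] ℂ := h.comp σL
    let E3 : K →ₐ[ℚ] ℂ := h.comp τL
    have hE23 : E2 ≠ E3 := by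
      intro h0
      apply hsigne
      ext x
      exact congrArg Subtype.val (hinj (DFunLike.congr_fun h0 x))
    let w : K →ₗ[ℚ] ℂ := (1 - c) • B ρ - B E2 + c • B E3
    have hwA : w ∈ A := by
      rw [hAdef, LinearMap.mem_ker]
      ext v
      have h0 := hrel v v.2
      have h1 : h ((1 - lam') * ιL v - σL v + lam' * τL v) = 0 := by rw [h0, map_zero]
      rw [map_add, map_sub, map_mul, map_mul, map_sub, map_one] at h1
      simp only [res, w, LinearMap.coe_mk, AddHom.coe_mk, LinearMap.comp_apply,
        LinearMap.add_apply, LinearMap.sub_apply, LinearMap.smul_apply, smul_eq_mul,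
        Submodule.coe_subtype, LinearMap.zero_apply]
      rw [hB, hB, hB]
      simp only [fam, AlgHom.toLinearMap_apply, E2, E3, AlgHom.comp_apply]
      rw [hρ]
      linear_combination h1
    have hreprw : B.repr w =
        (1 - c) • Finsupp.single ρ 1 - Finsupp.single E2 1 + c • Finsupp.single E3 1 := by
      simp [w, map_add, map_sub, map_smul, Basis.repr_self]
    have hval : ∀ a, (B.repr w) a =
        (1 - c) * (if ρ = a then 1 else 0) - (if E2 = a then 1 else 0)
          + c * (if E3 = a then 1 else 0) := by
      intro a
      rw [hreprw]
      by_cases hra : ρ = a <;> by_cases h2a : E2 = a <;> by_cases h3a : E3 = a <;>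
        simp [Finsupp.single_apply, hra, h2a, h3a, smul_eq_mul] <;> ring
    have hsupp : (B.repr w).support ⊆ {ρ, E2, E3} := by
      intro a ha
      rw [Finsupp.mem_support_iff] at ha
      by_contra hmem
      simp only [Finset.mem_insert, Finset.mem_singleton, not_or] at hmem
      obtain ⟨h1, h2, h3⟩ := hmem
      apply ha
      rw [hval]
      simp [Ne.symm h1, Ne.symm h2, Ne.symm h3]
    refine ⟨w, hwA, ?_, ?_⟩
    · rw [Finsupp.mem_support_iff, hval]
      rcases eq_or_ne E2 ρ with h2 | h2 <;> rcases eq_or_ne E3 ρ with h3 | h3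
      · exact absurd (h2.trans h3.symm) hE23
      · intro h0
        rw [if_pos rfl, if_pos h2, if_neg h3] at h0
        exact hc0 (by linear_combination -h0)
      · intro h0
        rw [if_pos rfl, if_pos h3, if_neg h2] at h0
        exact one_ne_zero (α := ℂ) (by linear_combination h0)
      · intro h0
        rw [if_pos rfl, if_neg h2, if_neg h3] at h0
        exact hc1 (by linear_combination -h0)
    · refine (Finset.card_le_card hsupp).trans ?_
      refine (Finset.card_insert_le _ _).trans ?_
      refine Nat.succ_le_succ ?_
      refine (Finset.card_insert_le _ _).trans ?_
      simp
  choose w hwA hwmem hwcard using key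
  -- extract a finite linearly independent spanning family
  obtain ⟨t, hts, hsp, hli2⟩ := exists_linearIndependent ℂ (Set.range w)
  have htfin : t.Finite := hli2.setFinite
  haveI : Fintype t := htfin.fintype
  have hTcard : t.toFinset.card ≤ finrank ℂ A := by
    rw [← finrank_span_set_eq_card hli2]
    apply Submodule.finrank_mono
    rw [Submodule.span_le]
    intro u hu
    obtain ⟨ρ, rfl⟩ := hts hu
    exact hwA ρ
  let S : Finset (K →ₐ[ℚ] ℂ) := t.toFinset.biUnion (fun u => (B.repr u).support)
  have hScard : S.card ≤ 3 * t.toFinset.card := by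
    refine (Finset.card_biUnion_le).trans ?_
    calc ∑ u ∈ t.toFinset, (B.repr u).support.card
        ≤ ∑ _u ∈ t.toFinset, 3 := by
          refine Finset.sum_le_sum fun u hu => ?_
          obtain ⟨ρ, rfl⟩ := hts (Set.mem_toFinset.mp hu)
          exact hwcard ρ
      _ = 3 * t.toFinset.card := by rw [Finset.sum_const, smul_eq_mul, mul_comm]
  have hmemS : ∀ ρ : K →ₐ[ℚ] ℂ, ρ ∈ S := by
    intro ρ
    have hw : w ρ ∈ Submodule.span ℂ t := by
      rw [hsp]; exact Submodule.subset_span ⟨ρ, rfl⟩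
    have hle : Submodule.span ℂ t ≤
        Submodule.comap (B.repr : (K →ₗ[ℚ] ℂ) →ₗ[ℂ] _) (Finsupp.supported ℂ ℂ (S : Set (K →ₐ[ℚ] ℂ))) := by
      rw [Submodule.span_le]
      intro u hu
      simp only [Set.mem_preimage, SetLike.mem_coe, Submodule.mem_comap,
        LinearEquiv.coe_coe, Finsupp.mem_supported]
      intro a ha
      simp only [Finset.coe_biUnion, Set.mem_iUnion, Finset.mem_coe, S]
      exact ⟨u, Set.mem_toFinset.mpr hu, ha⟩
    have := hle hw
    simp only [Submodule.mem_comap, LinearEquiv.coe_coe, Finsupp.mem_supported] at this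
    exact this (hwmem ρ)
  have hSuniv : S = Finset.univ := Finset.eq_univ_iff_forall.mpr hmemS
  have hncard : n ≤ 3 * finrank ℂ A := by
    have h1 : n = S.card := by rw [hSuniv, Finset.card_univ, hcardEmb]
    calc n = S.card := h1
      _ ≤ 3 * t.toFinset.card := hScard
      _ ≤ 3 * finrank ℂ A := Nat.mul_le_mul_left 3 hTcard
  omega
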